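/- The assignment W_{-k} ↦ w_{-k}, W_{k+1} ↦ w_{k+1}, G_{k+1} ↦ g_{k+1}, G̃_{k+1} ↦ g̃_{k+1} (k ∈ ℕ) extends to a K-algebra isomorphism B ≅ Ā. In particular, in B the following relations hold for all k, ℓ ∈ ℕ: [W_{-ℓ}, W_{k+1}] = (G̃_{k+ℓ+1} − G_{k+ℓ+1})/2; [G̃_{k+1}, W_{-ℓ}] = [W_{-ℓ}, G_{k+1}] = 16·W_{-k-ℓ-1}; and [W_{ℓ+1}, G̃_{k+1}] = [G_{k+1}, W_{ℓ+1}] = 16·W_{k+ℓ+2}. -/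

import Mathlib

/- STATEMENT 9: the specialization B (q = 1, ρ = 16) of 𝒜q is isomorphic to Ā,
and the Ā-type relations hold in B. -/

noncomputable section

namespace AltCl

variable (K : Type) [Field K] [CharZero K]

/-- Commutator `[x,y] = xy - yx`. -/
def br {A : Type*} [Ring A] (x y : A) : A := x * y - y * x

/-- Generators: `wm k ↦ W_{-k}`, `wp k ↦ W_{k+1}`, `g k ↦ G_{k+1}`, `gt k ↦ G̃_{k+1}`. -/
inductive Gen : Type
  | wm : ℕ → Gen
  | wp : ℕ → Gen
  | g : ℕ → Gen
  | gt : ℕ → Gen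

/-- Abbreviations in the free algebra. -/
def fg (x : Gen) : FreeAlgebra K Gen := FreeAlgebra.ι K x

/-- The defining relations of `B`: the specialization at `q = 1`, `ρ = 16` of the
defining relations of `𝒜q`. -/
inductive relB : FreeAlgebra K Gen → FreeAlgebra K Gen → Prop
  | r1a (k : ℕ) : relB (br (fg K (.wm 0)) (fg K (.wp k)))
      ((2⁻¹ : K) • (fg K (.gt k) - fg K (.g k)))
  | r1b (k : ℕ) : relB (br (fg K (.wm k)) (fg K (.wp 0)))
      ((2⁻¹ : K) • (fg K (.gt k) - fg K (.g k)))
  | r2a (k : ℕ) : relB (br (fg K (.wm 0)) (fg K (.g k))) ((16 : K) • fg K (.wm (k + 1)))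
  | r2b (k : ℕ) : relB (br (fg K (.gt k)) (fg K (.wm 0))) ((16 : K) • fg K (.wm (k + 1)))
  | r3a (k : ℕ) : relB (br (fg K (.g k)) (fg K (.wp 0))) ((16 : K) • fg K (.wp (k + 1)))
  | r3b (k : ℕ) : relB (br (fg K (.wp 0)) (fg K (.gt k))) ((16 : K) • fg K (.wp (k + 1)))
  | r4a (k l : ℕ) : relB (br (fg K (.wm k)) (fg K (.wm l))) 0
  | r4b (k l : ℕ) : relB (br (fg K (.wp k)) (fg K (.wp l))) 0
  | r5 (k l : ℕ) : relB (br (fg K (.wm k)) (fg K (.wp l)) + br (fg K (.wp k)) (fg K (.wm l))) 0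
  | r6 (k l : ℕ) : relB (br (fg K (.wm k)) (fg K (.g l)) + br (fg K (.g k)) (fg K (.wm l))) 0
  | r7 (k l : ℕ) : relB (br (fg K (.wm k)) (fg K (.gt l)) + br (fg K (.gt k)) (fg K (.wm l))) 0
  | r8 (k l : ℕ) : relB (br (fg K (.wp k)) (fg K (.g l)) + br (fg K (.g k)) (fg K (.wp l))) 0
  | r9 (k l : ℕ) : relB (br (fg K (.wp k)) (fg K (.gt l)) + br (fg K (.gt k)) (fg K (.wp l))) 0
  | r10a (k l : ℕ) : relB (br (fg K (.g k)) (fg K (.g l))) 0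
  | r10b (k l : ℕ) : relB (br (fg K (.gt k)) (fg K (.gt l))) 0
  | r11 (k l : ℕ) : relB (br (fg K (.gt k)) (fg K (.g l)) + br (fg K (.g k)) (fg K (.gt l))) 0

/-- The algebra `B`. -/
abbrev B : Type := RingQuot (relB K)

/-- `W_{-k}` in `B`. -/
def Wm (k : ℕ) : B K := RingQuot.mkAlgHom K (relB K) (fg K (.wm k))
/-- `W_{k+1}` in `B`. -/
def Wp (k : ℕ) : B K := RingQuot.mkAlgHom K (relB K) (fg K (.wp k))
/-- `G_{k+1}` in `B`. -/
def G (k : ℕ) : B K := RingQuot.mkAlgHom K (relB K) (fg K (.g k))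
/-- `G̃_{k+1}` in `B`. -/
def Gt (k : ℕ) : B K := RingQuot.mkAlgHom K (relB K) (fg K (.gt k))

/-- The defining relations of the algebra `Ā` (Definition 2.11 of the paper). -/
inductive relA : FreeAlgebra K Gen → FreeAlgebra K Gen → Prop
  | a1 (k l : ℕ) : relA (br (fg K (.wm l)) (fg K (.wp k)))
      ((2⁻¹ : K) • (fg K (.gt (k + l)) - fg K (.g (k + l))))
  | a2a (k l : ℕ) : relA (br (fg K (.gt k)) (fg K (.wm l)))
      ((16 : K) • fg K (.wm (k + l + 1)))
  | a2b (k l : ℕ) : relA (br (fg K (.wm l)) (fg K (.g k)))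
      ((16 : K) • fg K (.wm (k + l + 1)))
  | a3a (k l : ℕ) : relA (br (fg K (.wp l)) (fg K (.gt k)))
      ((16 : K) • fg K (.wp (k + l + 1)))
  | a3b (k l : ℕ) : relA (br (fg K (.g k)) (fg K (.wp l)))
      ((16 : K) • fg K (.wp (k + l + 1)))
  | a4a (k l : ℕ) : relA (br (fg K (.wm k)) (fg K (.wm l))) 0
  | a4b (k l : ℕ) : relA (br (fg K (.wp k)) (fg K (.wp l))) 0
  | a4c (k l : ℕ) : relA (br (fg K (.g k)) (fg K (.g l))) 0
  | a4d (k l : ℕ) : relA (br (fg K (.gt k)) (fg K (.gt l))) 0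

/-- The algebra `Ā`. -/
abbrev Abar : Type := RingQuot (relA K)

/-- `w_{-k}` in `Ā`. -/
def wm (k : ℕ) : Abar K := RingQuot.mkAlgHom K (relA K) (fg K (.wm k))
/-- `w_{k+1}` in `Ā`. -/
def wp (k : ℕ) : Abar K := RingQuot.mkAlgHom K (relA K) (fg K (.wp k))
/-- `g_{k+1}` in `Ā`. -/
def g (k : ℕ) : Abar K := RingQuot.mkAlgHom K (relA K) (fg K (.g k))
/-- `g̃_{k+1}` in `Ā`. -/
def gt (k : ℕ) : Abar K := RingQuot.mkAlgHom K (relA K) (fg K (.gt k))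


set_option linter.unusedSectionVars false

/-! ### Auxiliary development -/

section BrLemmas

lemma br_antisymm {A : Type*} [Ring A] (x y : A) : br x y = - br y x := by
  simp [br]

lemma jac {A : Type*} [Ring A] (a b c : A) :
    br a (br b c) = br (br a b) c + br b (br a c) := by
  simp only [br]; noncomm_ring

lemma jac' {A : Type*} [Ring A] (a b c : A) :
    br (br a b) c = br a (br b c) - br b (br a c) := by
  simp only [br]; noncomm_ring

lemma br_smul_left {K : Type*} [CommRing K] {A : Type*} [Ring A] [Algebra K A] (c : K) (x y : A) :
    br (c • x) y = c • br x y := by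
  simp [br, smul_mul_assoc, mul_smul_comm, smul_sub]

lemma br_smul_right {K : Type*} [CommRing K] {A : Type*} [Ring A] [Algebra K A] (c : K) (x y : A) :
    br x (c • y) = c • br x y := by
  simp [br, smul_mul_assoc, mul_smul_comm, smul_sub]

lemma br_sub_left {A : Type*} [Ring A] (x y z : A) : br (x - y) z = br x z - br y z := by
  simp only [br]; noncomm_ring

lemma br_sub_right {A : Type*} [Ring A] (x y z : A) : br x (y - z) = br x y - br x z := by
  simp only [br]; noncomm_ring

lemma br_neg_right {A : Type*} [Ring A] (x y : A) : br x (-y) = - br x y := by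
  simp only [br]; noncomm_ring

lemma br_zero_right {A : Type*} [Ring A] (x : A) : br x 0 = 0 := by simp [br]
lemma br_zero_left {A : Type*} [Ring A] (x : A) : br 0 x = 0 := by simp [br]

lemma smul_cancel {K : Type*} [Field K] {M : Type*} [AddCommGroup M] [Module K M] {c : K}
    (hc : c ≠ 0) {x y : M} (h : c • x = c • y) : x = y := by
  have := congrArg (fun z => c⁻¹ • z) h
  simpa [smul_smul, inv_mul_cancel₀ hc] using this

end BrLemmas

lemma sixteen_ne : (16 : K) ≠ 0 := by norm_num

/-! ### The defining relations of `B`, in `B` -/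

lemma hB1a (k : ℕ) : br (Wm K 0) (Wp K k) = (2⁻¹ : K) • (Gt K k - G K k) := by
  have h := RingQuot.mkAlgHom_rel K (relB.r1a (K := K) k)
  simpa only [br, Wm, Wp, G, Gt, map_sub, map_mul, map_smul] using h

lemma hB1b (k : ℕ) : br (Wm K k) (Wp K 0) = (2⁻¹ : K) • (Gt K k - G K k) := by
  have h := RingQuot.mkAlgHom_rel K (relB.r1b (K := K) k)
  simpa only [br, Wm, Wp, G, Gt, map_sub, map_mul, map_smul] using h

lemma hB2a (k : ℕ) : br (Wm K 0) (G K k) = (16 : K) • Wm K (k + 1) := by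
  have h := RingQuot.mkAlgHom_rel K (relB.r2a (K := K) k)
  simpa only [br, Wm, Wp, G, Gt, map_sub, map_mul, map_smul] using h

lemma hB2b (k : ℕ) : br (Gt K k) (Wm K 0) = (16 : K) • Wm K (k + 1) := by
  have h := RingQuot.mkAlgHom_rel K (relB.r2b (K := K) k)
  simpa only [br, Wm, Wp, G, Gt, map_sub, map_mul, map_smul] using h

lemma hB3a (k : ℕ) : br (G K k) (Wp K 0) = (16 : K) • Wp K (k + 1) := by
  have h := RingQuot.mkAlgHom_rel K (relB.r3a (K := K) k)
  simpa only [br, Wm, Wp, G, Gt, map_sub, map_mul, map_smul] using h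

lemma hB3b (k : ℕ) : br (Wp K 0) (Gt K k) = (16 : K) • Wp K (k + 1) := by
  have h := RingQuot.mkAlgHom_rel K (relB.r3b (K := K) k)
  simpa only [br, Wm, Wp, G, Gt, map_sub, map_mul, map_smul] using h

lemma hB4a (k l : ℕ) : br (Wm K k) (Wm K l) = 0 := by
  have h := RingQuot.mkAlgHom_rel K (relB.r4a (K := K) k l)
  simpa only [br, Wm, Wp, G, Gt, map_sub, map_mul, map_zero] using h

lemma hB4b (k l : ℕ) : br (Wp K k) (Wp K l) = 0 := by
  have h := RingQuot.mkAlgHom_rel K (relB.r4b (K := K) k l)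
  simpa only [br, Wm, Wp, G, Gt, map_sub, map_mul, map_zero] using h

lemma hB7 (k l : ℕ) : br (Wm K k) (Gt K l) + br (Gt K k) (Wm K l) = 0 := by
  have h := RingQuot.mkAlgHom_rel K (relB.r7 (K := K) k l)
  simpa only [br, Wm, Wp, G, Gt, map_add, map_sub, map_mul, map_zero] using h

lemma hB8 (k l : ℕ) : br (Wp K k) (G K l) + br (G K k) (Wp K l) = 0 := by
  have h := RingQuot.mkAlgHom_rel K (relB.r8 (K := K) k l)
  simpa only [br, Wm, Wp, G, Gt, map_add, map_sub, map_mul, map_zero] using h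

lemma hB9 (k l : ℕ) : br (Wp K k) (Gt K l) + br (Gt K k) (Wp K l) = 0 := by
  have h := RingQuot.mkAlgHom_rel K (relB.r9 (K := K) k l)
  simpa only [br, Wm, Wp, G, Gt, map_add, map_sub, map_mul, map_zero] using h

lemma hB10a (k l : ℕ) : br (G K k) (G K l) = 0 := by
  have h := RingQuot.mkAlgHom_rel K (relB.r10a (K := K) k l)
  simpa only [br, Wm, Wp, G, Gt, map_sub, map_mul, map_zero] using h

lemma hB10b (k l : ℕ) : br (Gt K k) (Gt K l) = 0 := by
  have h := RingQuot.mkAlgHom_rel K (relB.r10b (K := K) k l)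
  simpa only [br, Wm, Wp, G, Gt, map_sub, map_mul, map_zero] using h

/-! ### Derived relations in `B` -/

lemma L2b' (k : ℕ) : br (Gt K 0) (Wm K k) = (16 : K) • Wm K (k + 1) := by
  have h := hB7 K k 0
  rw [hB2b K k] at h
  have h2 := eq_neg_of_add_eq_zero_left h
  rw [br_antisymm, h2, neg_neg]

lemma L3a' (k : ℕ) : br (G K 0) (Wp K k) = (16 : K) • Wp K (k + 1) := by
  have h := hB8 K k 0
  rw [hB3a K k] at h
  have h2 := eq_neg_of_add_eq_zero_left h
  rw [br_antisymm, h2, neg_neg]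

lemma L3b' (k : ℕ) : br (Wp K k) (Gt K 0) = (16 : K) • Wp K (k + 1) := by
  have h := hB9 K k 0
  have h2 : br (Gt K k) (Wp K 0) = -((16 : K) • Wp K (k + 1)) := by
    rw [br_antisymm, hB3b K k]
  rw [h2, ← sub_eq_add_neg] at h
  exact sub_eq_zero.mp h

lemma F0 (b : ℕ) : br (Gt K 0) (G K b) = 0 := by
  have hwp : br (Wp K 0) (G K b) = -((16 : K) • Wp K (b + 1)) := by
    have h := hB8 K 0 b
    rw [L3a' K b] at h
    exact eq_neg_of_add_eq_zero_left h
  have hD : Gt K 0 - G K 0 = (2 : K) • br (Wm K 0) (Wp K 0) := by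
    rw [hB1a K 0, smul_smul]
    norm_num
  have e1 : br (Wm K 0) (br (Wp K 0) (G K b))
      = -((16 : K) • ((2⁻¹ : K) • (Gt K (b + 1) - G K (b + 1)))) := by
    rw [hwp, br_neg_right, br_smul_right, hB1a K (b + 1)]
  have e2 : br (Wp K 0) (br (Wm K 0) (G K b))
      = -((16 : K) • ((2⁻¹ : K) • (Gt K (b + 1) - G K (b + 1)))) := by
    rw [hB2a K b, br_smul_right, br_antisymm (Wp K 0) (Wm K (b + 1)), hB1b K (b + 1)]
    module
  have key : br (Gt K 0) (G K b) = br (Gt K 0 - G K 0) (G K b) := by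
    rw [br_sub_left, hB10a K 0 b, sub_zero]
  rw [key, hD, br_smul_left, jac', e1, e2]
  module

/-! ### The `Ā`-type relations in `B` -/

lemma LB (k l : ℕ) : br (Gt K k) (Wm K l) = (16 : K) • Wm K (k + l + 1) := by
  induction l generalizing k with
  | zero => exact hB2b K k
  | succ l ih =>
    show br (Gt K k) (Wm K (l + 1)) = (16 : K) • Wm K (k + l + 1 + 1)
    apply smul_cancel (sixteen_ne K)
    rw [← br_smul_right, ← L2b' K l, jac, hB10b K k 0, br_zero_left, zero_add, ih k,
      br_smul_right, L2b' K (k + l + 1)]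

lemma LC (k l : ℕ) : br (Wm K l) (G K k) = (16 : K) • Wm K (k + l + 1) := by
  induction l generalizing k with
  | zero => exact hB2a K k
  | succ l ih =>
    show br (Wm K (l + 1)) (G K k) = (16 : K) • Wm K (k + l + 1 + 1)
    apply smul_cancel (sixteen_ne K)
    rw [← br_smul_left, ← L2b' K l, jac', F0 K k, br_zero_right, sub_zero, ih k,
      br_smul_right, L2b' K (k + l + 1)]

lemma LD (k l : ℕ) : br (Wp K l) (Gt K k) = (16 : K) • Wp K (k + l + 1) := by
  induction l generalizing k with
  | zero => exact hB3b K k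
  | succ l ih =>
    show br (Wp K (l + 1)) (Gt K k) = (16 : K) • Wp K (k + l + 1 + 1)
    apply smul_cancel (sixteen_ne K)
    have hg : br (Gt K 0) (Wp K (k + l + 1)) = -((16 : K) • Wp K (k + l + 1 + 1)) := by
      rw [br_antisymm, L3b' K (k + l + 1)]
    rw [← br_smul_left, ← L3b' K l, jac', hB10b K 0 k, br_zero_right, ih k,
      br_smul_right, hg]
    module

lemma LE (k l : ℕ) : br (G K k) (Wp K l) = (16 : K) • Wp K (k + l + 1) := by
  induction l generalizing k with
  | zero => exact hB3a K k
  | succ l ih =>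
    show br (G K k) (Wp K (l + 1)) = (16 : K) • Wp K (k + l + 1 + 1)
    apply smul_cancel (sixteen_ne K)
    rw [← br_smul_right, ← L3a' K l, jac, hB10a K k 0, br_zero_left, zero_add, ih k,
      br_smul_right, L3a' K (k + l + 1)]

lemma LA (k l : ℕ) : br (Wm K l) (Wp K k) = (2⁻¹ : K) • (Gt K (k + l) - G K (k + l)) := by
  induction l generalizing k with
  | zero => exact hB1a K k
  | succ l ih =>
    have e : k + (l + 1) = k + 1 + l := by omega
    rw [e]
    apply smul_cancel (sixteen_ne K)
    have hg : br (Gt K 0) (Wp K k) = -((16 : K) • Wp K (k + 1)) := by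
      rw [br_antisymm, L3b' K k]
    rw [← br_smul_left, ← L2b' K l, jac', ih k, br_smul_right, br_sub_right,
      hB10b K 0 (k + l), F0 K (k + l), hg, br_neg_right, br_smul_right, ih (k + 1)]
    module

/-! ### The defining relations of `Ā`, in `Ā` -/

lemma hA1 (k l : ℕ) : br (wm K l) (wp K k) = (2⁻¹ : K) • (gt K (k + l) - g K (k + l)) := by
  have h := RingQuot.mkAlgHom_rel K (relA.a1 (K := K) k l)
  simpa only [br, AltCl.wm, AltCl.wp, AltCl.g, AltCl.gt, map_sub, map_mul, map_smul] using h

lemma hA2a (k l : ℕ) : br (gt K k) (wm K l) = (16 : K) • wm K (k + l + 1) := by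
  have h := RingQuot.mkAlgHom_rel K (relA.a2a (K := K) k l)
  simpa only [br, AltCl.wm, AltCl.wp, AltCl.g, AltCl.gt, map_sub, map_mul, map_smul] using h

lemma hA2b (k l : ℕ) : br (wm K l) (g K k) = (16 : K) • wm K (k + l + 1) := by
  have h := RingQuot.mkAlgHom_rel K (relA.a2b (K := K) k l)
  simpa only [br, AltCl.wm, AltCl.wp, AltCl.g, AltCl.gt, map_sub, map_mul, map_smul] using h

lemma hA3a (k l : ℕ) : br (wp K l) (gt K k) = (16 : K) • wp K (k + l + 1) := by
  have h := RingQuot.mkAlgHom_rel K (relA.a3a (K := K) k l)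
  simpa only [br, AltCl.wm, AltCl.wp, AltCl.g, AltCl.gt, map_sub, map_mul, map_smul] using h

lemma hA3b (k l : ℕ) : br (g K k) (wp K l) = (16 : K) • wp K (k + l + 1) := by
  have h := RingQuot.mkAlgHom_rel K (relA.a3b (K := K) k l)
  simpa only [br, AltCl.wm, AltCl.wp, AltCl.g, AltCl.gt, map_sub, map_mul, map_smul] using h

lemma hA4a (k l : ℕ) : br (wm K k) (wm K l) = 0 := by
  have h := RingQuot.mkAlgHom_rel K (relA.a4a (K := K) k l)
  simpa only [br, AltCl.wm, AltCl.wp, AltCl.g, AltCl.gt, map_sub, map_mul, map_zero] using h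

lemma hA4b (k l : ℕ) : br (wp K k) (wp K l) = 0 := by
  have h := RingQuot.mkAlgHom_rel K (relA.a4b (K := K) k l)
  simpa only [br, AltCl.wm, AltCl.wp, AltCl.g, AltCl.gt, map_sub, map_mul, map_zero] using h

lemma hA4c (k l : ℕ) : br (g K k) (g K l) = 0 := by
  have h := RingQuot.mkAlgHom_rel K (relA.a4c (K := K) k l)
  simpa only [br, AltCl.wm, AltCl.wp, AltCl.g, AltCl.gt, map_sub, map_mul, map_zero] using h

lemma hA4d (k l : ℕ) : br (gt K k) (gt K l) = 0 := by
  have h := RingQuot.mkAlgHom_rel K (relA.a4d (K := K) k l)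
  simpa only [br, AltCl.wm, AltCl.wp, AltCl.g, AltCl.gt, map_sub, map_mul, map_zero] using h

/-- In `Ā`, the `g`'s and `g̃`'s mutually commute. -/
lemma FA (a b : ℕ) : br (gt K a) (g K b) = 0 := by
  have hg : g K b = gt K b - (2 : K) • br (wm K 0) (wp K b) := by
    rw [hA1 K b 0, smul_smul]
    norm_num
  have h1 : br (gt K a) (wm K 0) = (16 : K) • wm K (a + 1) := hA2a K a 0
  have h2 : br (gt K a) (wp K b) = -((16 : K) • wp K (a + b + 1)) := by
    rw [br_antisymm, hA3a K a b]
  have e1 : br (br (gt K a) (wm K 0)) (wp K b)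
      = (16 : K) • ((2⁻¹ : K) • (gt K (a + b + 1) - g K (a + b + 1))) := by
    rw [h1, br_smul_left, hA1 K b (a + 1), show b + (a + 1) = a + b + 1 by omega]
  have e2 : br (wm K 0) (br (gt K a) (wp K b))
      = -((16 : K) • ((2⁻¹ : K) • (gt K (a + b + 1) - g K (a + b + 1)))) := by
    rw [h2, br_neg_right, br_smul_right, hA1 K (a + b + 1) 0]
  rw [hg, br_sub_right, hA4d K a b, br_smul_right, jac, e1, e2]
  module

/-! ### The two algebra homomorphisms -/

lemma relBtoA : ∀ ⦃x y : FreeAlgebra K Gen⦄, relB K x y →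
    RingQuot.mkAlgHom K (relA K) x = RingQuot.mkAlgHom K (relA K) y := by
  have hbr : ∀ u v : FreeAlgebra K Gen,
      RingQuot.mkAlgHom K (relA K) (br u v)
        = br (RingQuot.mkAlgHom K (relA K) u) (RingQuot.mkAlgHom K (relA K) v) := by
    intro u v; simp [br, map_sub, map_mul]
  intro x y h
  induction h with
  | r1a k =>
    rw [hbr, map_smul, map_sub]
    show br (wm K 0) (wp K k) = (2⁻¹ : K) • (gt K k - g K k)
    simpa using hA1 K k 0
  | r1b k =>
    rw [hbr, map_smul, map_sub]
    show br (wm K k) (wp K 0) = (2⁻¹ : K) • (gt K k - g K k)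
    simpa using hA1 K 0 k
  | r2a k =>
    rw [hbr, map_smul]
    show br (wm K 0) (g K k) = (16 : K) • wm K (k + 1)
    simpa using hA2b K k 0
  | r2b k =>
    rw [hbr, map_smul]
    show br (gt K k) (wm K 0) = (16 : K) • wm K (k + 1)
    simpa using hA2a K k 0
  | r3a k =>
    rw [hbr, map_smul]
    show br (g K k) (wp K 0) = (16 : K) • wp K (k + 1)
    simpa using hA3b K k 0
  | r3b k =>
    rw [hbr, map_smul]
    show br (wp K 0) (gt K k) = (16 : K) • wp K (k + 1)
    simpa using hA3a K k 0
  | r4a k l =>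
    rw [hbr, map_zero]
    exact hA4a K k l
  | r4b k l =>
    rw [hbr, map_zero]
    exact hA4b K k l
  | r5 k l =>
    rw [map_add, hbr, hbr, map_zero]
    show br (wm K k) (wp K l) + br (wp K k) (wm K l) = 0
    rw [hA1 K l k, br_antisymm (wp K k) (wm K l), hA1 K k l, Nat.add_comm l k]
    simp
  | r6 k l =>
    rw [map_add, hbr, hbr, map_zero]
    show br (wm K k) (g K l) + br (g K k) (wm K l) = 0
    rw [hA2b K l k, br_antisymm (g K k) (wm K l), hA2b K k l, Nat.add_comm l k]
    simp
  | r7 k l =>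
    rw [map_add, hbr, hbr, map_zero]
    show br (wm K k) (gt K l) + br (gt K k) (wm K l) = 0
    rw [br_antisymm (wm K k) (gt K l), hA2a K l k, hA2a K k l, Nat.add_comm l k]
    simp
  | r8 k l =>
    rw [map_add, hbr, hbr, map_zero]
    show br (wp K k) (g K l) + br (g K k) (wp K l) = 0
    rw [br_antisymm (wp K k) (g K l), hA3b K l k, hA3b K k l, Nat.add_comm l k]
    simp
  | r9 k l =>
    rw [map_add, hbr, hbr, map_zero]
    show br (wp K k) (gt K l) + br (gt K k) (wp K l) = 0
    rw [hA3a K l k, br_antisymm (gt K k) (wp K l), hA3a K k l, Nat.add_comm l k]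
    simp
  | r10a k l =>
    rw [hbr, map_zero]
    exact hA4c K k l
  | r10b k l =>
    rw [hbr, map_zero]
    exact hA4d K k l
  | r11 k l =>
    rw [map_add, hbr, hbr, map_zero]
    show br (gt K k) (g K l) + br (g K k) (gt K l) = 0
    rw [FA K k l, br_antisymm (g K k) (gt K l), FA K l k]
    simp

lemma relAtoB : ∀ ⦃x y : FreeAlgebra K Gen⦄, relA K x y →
    RingQuot.mkAlgHom K (relB K) x = RingQuot.mkAlgHom K (relB K) y := by
  have hbr : ∀ u v : FreeAlgebra K Gen,
      RingQuot.mkAlgHom K (relB K) (br u v)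
        = br (RingQuot.mkAlgHom K (relB K) u) (RingQuot.mkAlgHom K (relB K) v) := by
    intro u v; simp [br, map_sub, map_mul]
  intro x y h
  induction h with
  | a1 k l =>
    rw [hbr, map_smul, map_sub]
    exact LA K k l
  | a2a k l =>
    rw [hbr, map_smul]
    exact LB K k l
  | a2b k l =>
    rw [hbr, map_smul]
    exact LC K k l
  | a3a k l =>
    rw [hbr, map_smul]
    exact LD K k l
  | a3b k l =>
    rw [hbr, map_smul]
    exact LE K k l
  | a4a k l =>
    rw [hbr, map_zero]
    exact hB4a K k l
  | a4b k l =>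
    rw [hbr, map_zero]
    exact hB4b K k l
  | a4c k l =>
    rw [hbr, map_zero]
    exact hB10a K k l
  | a4d k l =>
    rw [hbr, map_zero]
    exact hB10b K k l

def toA : B K →ₐ[K] Abar K :=
  RingQuot.liftAlgHom K ⟨RingQuot.mkAlgHom K (relA K), relBtoA K⟩

def toB : Abar K →ₐ[K] B K :=
  RingQuot.liftAlgHom K ⟨RingQuot.mkAlgHom K (relB K), relAtoB K⟩

lemma toA_gen (x : Gen) :
    toA K (RingQuot.mkAlgHom K (relB K) (fg K x)) = RingQuot.mkAlgHom K (relA K) (fg K x) :=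
  RingQuot.liftAlgHom_mkAlgHom_apply K _ _ _

lemma toB_gen (x : Gen) :
    toB K (RingQuot.mkAlgHom K (relA K) (fg K x)) = RingQuot.mkAlgHom K (relB K) (fg K x) :=
  RingQuot.liftAlgHom_mkAlgHom_apply K _ _ _

lemma quotHom_ext {r : FreeAlgebra K Gen → FreeAlgebra K Gen → Prop} {C : Type*}
    [Semiring C] [Algebra K C] {f h : RingQuot r →ₐ[K] C}
    (w : ∀ x : Gen, f (RingQuot.mkAlgHom K r (fg K x)) = h (RingQuot.mkAlgHom K r (fg K x))) :
    f = h := by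
  have key : f.comp (RingQuot.mkAlgHom K r) = h.comp (RingQuot.mkAlgHom K r) := by
    apply FreeAlgebra.hom_ext
    funext x
    simpa [fg, Function.comp] using w x
  apply AlgHom.ext
  intro b
  obtain ⟨a, rfl⟩ := RingQuot.mkAlgHom_surjective K r b
  exact DFunLike.congr_fun key a

/-- The isomorphism `B ≅ Ā`. -/
def isoBA : B K ≃ₐ[K] Abar K :=
  AlgEquiv.ofAlgHom (toA K) (toB K)
    (quotHom_ext K fun x => by
      simp only [AlgHom.comp_apply, AlgHom.id_apply, toB_gen, toA_gen])
    (quotHom_ext K fun x => by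
      simp only [AlgHom.comp_apply, AlgHom.id_apply, toA_gen, toB_gen])

/-- The assignment `W_{-k} ↦ w_{-k}`, `W_{k+1} ↦ w_{k+1}`, `G_{k+1} ↦ g_{k+1}`,
`G̃_{k+1} ↦ g̃_{k+1}` extends to a `K`-algebra isomorphism `B ≅ Ā`; in
particular, the relations of `Ā` hold in `B` for all `k, ℓ ∈ ℕ`. -/
theorem statement9 :
    (∃ φ : B K ≃ₐ[K] Abar K,
      (∀ k : ℕ, φ (Wm K k) = wm K k) ∧ (∀ k : ℕ, φ (Wp K k) = wp K k) ∧
      (∀ k : ℕ, φ (G K k) = g K k) ∧ (∀ k : ℕ, φ (Gt K k) = gt K k)) ∧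
    (∀ k l : ℕ,
      br (Wm K l) (Wp K k) = (2⁻¹ : K) • (Gt K (k + l) - G K (k + l)) ∧
      br (Gt K k) (Wm K l) = (16 : K) • Wm K (k + l + 1) ∧
      br (Wm K l) (G K k) = (16 : K) • Wm K (k + l + 1) ∧
      br (Wp K l) (Gt K k) = (16 : K) • Wp K (k + l + 1) ∧
      br (G K k) (Wp K l) = (16 : K) • Wp K (k + l + 1)) := by
  constructor
  · refine ⟨isoBA K, fun k => ?_, fun k => ?_, fun k => ?_, fun k => ?_⟩ <;>
      exact toA_gen K _
  · exact fun k l => ⟨LA K k l, LB K k l, LC K k l, LD K k l, LE K k l⟩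

end AltCl
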